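/- Let f ∈ ℚ[x] be a monic irreducible polynomial of degree d, let K be a field extension of ℚ and α ∈ K a root of f with K = ℚ(α) (i.e. K is generated over ℚ by α). Let g ∈ ℚ[t] be a polynomial of degree 2. Then the composition f(g(t)) is not irreducible in ℚ[t] if and only if there exists β ∈ K with g(β) = α. -/

import Mathlib

open Polynomial IntermediateField

lemma aux_monic (f : Polynomial ℚ) (hmonic : f.Monic)
    (hirr : Irreducible f)
    (K : Type*) [Field K] [Algebra ℚ K] (α : K) (hroot : Polynomial.aeval α f = 0)
    (hgen : Algebra.adjoin ℚ ({α} : Set K) = ⊤)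
    (g : Polynomial ℚ) (hg : g.natDegree = 2) (hgm : g.Monic) :
    ¬ Irreducible (f.comp g) ↔ ∃ β : K, Polynomial.aeval β g = α := by
  have hα : IsIntegral ℚ α := ⟨f, hmonic, hroot⟩
  have hfα : minpoly ℚ α = f := (minpoly.eq_of_irreducible_of_monic hirr hroot hmonic).symm
  have hItop : IntermediateField.adjoin ℚ ({α} : Set K) = ⊤ := by
    rw [eq_top_iff]
    intro x _
    exact IntermediateField.algebra_adjoin_le_adjoin ℚ {α} (hgen.ge trivial)
  have hd1 : 0 < f.natDegree := hirr.natDegree_pos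
  letI : Algebra ℚ (IntermediateField.adjoin ℚ ({α} : Set K)) := IntermediateField.algebra' _
  letI : Algebra ℚ ((⊤ : IntermediateField ℚ K)) := IntermediateField.algebra' _
  have e := (IntermediateField.equivOfEq hItop).trans (IntermediateField.topEquiv (F := ℚ) (E := K))
  haveI hFDa := IntermediateField.adjoin.finiteDimensional hα
  haveI hFD : FiniteDimensional ℚ K := Module.Finite.equiv e.toLinearEquiv
  have hfin : Module.finrank ℚ K = f.natDegree := by
    have h1 := IntermediateField.adjoin.finrank hα
    rw [hfα] at h1
    rw [← e.toLinearEquiv.finrank_eq, h1]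
  constructor
  · -- hard direction
    intro hnotirr
    by_contra hne
    apply hnotirr
    apply Polynomial.irreducible_comp hmonic hgm hirr
    intro E _ _ x hx
    have hxint : IsIntegral ℚ x := ⟨f, hmonic, by rw [← hx]; exact minpoly.aeval ℚ x⟩
    letI : Algebra ℚ (IntermediateField.adjoin ℚ ({x} : Set E)) := IntermediateField.algebra' _
    have hmapdeg : (g.map (algebraMap ℚ ℚ⟮x⟯)).natDegree = 2 := by
      rw [Polynomial.natDegree_map_eq_of_injective (algebraMap ℚ ℚ⟮x⟯).injective, hg]
    have hqdeg : (g.map (algebraMap ℚ ℚ⟮x⟯) - C (AdjoinSimple.gen ℚ x)).natDegree = 2 := by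
      rw [Polynomial.natDegree_sub_C, hmapdeg]
    have hq0 : g.map (algebraMap ℚ ℚ⟮x⟯) - C (AdjoinSimple.gen ℚ x) ≠ 0 := fun h => by
      simp [h] at hqdeg
    rw [Polynomial.irreducible_iff_roots_eq_zero_of_degree_le_three (by omega) (by omega)]
    rw [Multiset.eq_zero_iff_forall_notMem]
    intro z hz
    have hz' : (g.map (algebraMap ℚ ℚ⟮x⟯) - C (AdjoinSimple.gen ℚ x)).IsRoot z :=
      (Polynomial.mem_roots hq0).mp hz
    have hzg : Polynomial.aeval z g = AdjoinSimple.gen ℚ x := by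
      have h : eval z (g.map (algebraMap ℚ ℚ⟮x⟯) - C (AdjoinSimple.gen ℚ x)) = 0 := hz'
      rw [Polynomial.eval_sub, Polynomial.eval_C, sub_eq_zero, Polynomial.eval_map] at h
      rw [Polynomial.aeval_def]; exact h
    have hαroot : Polynomial.aeval α (minpoly ℚ x) = 0 := by rw [hx]; exact hroot
    let ψ : ℚ⟮x⟯ →ₐ[ℚ] K :=
      (AdjoinRoot.liftAlgHom (minpoly ℚ x) (Algebra.ofId ℚ K) α hαroot).comp
        (IntermediateField.adjoinRootEquivAdjoin ℚ hxint).symm.toAlgHom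
    have hψgen : ψ (AdjoinSimple.gen ℚ x) = α := by
      show AdjoinRoot.liftAlgHom (minpoly ℚ x) (Algebra.ofId ℚ K) α hαroot
        ((IntermediateField.adjoinRootEquivAdjoin ℚ hxint).symm (AdjoinSimple.gen ℚ x)) = α
      rw [IntermediateField.adjoinRootEquivAdjoin_symm_apply_gen]
      exact AdjoinRoot.liftAlgHom_root _ _ _ _
    exact hne ⟨ψ z, by rw [Polynomial.aeval_algHom_apply ψ z g, hzg, hψgen]⟩
  · -- easy direction
    intro ⟨β, hβ⟩ hcomp
    have hβint : IsIntegral ℚ β := IsIntegral.of_finite ℚ β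
    have hdvd : minpoly ℚ β ∣ f.comp g := minpoly.dvd _ _ (by
      rw [Polynomial.aeval_comp, hβ, hroot])
    obtain ⟨c, hc⟩ := hdvd
    rcases hcomp.isUnit_or_isUnit hc with h | h
    · exact (minpoly.irreducible hβint).not_isUnit h
    · have hcne : c ≠ 0 := fun h0 => by
        rw [h0, mul_zero] at hc
        exact (hmonic.comp hgm (by omega)).ne_zero hc
      have hdegc : c.natDegree = 0 := Polynomial.natDegree_eq_zero_of_isUnit h
      have h1 : (f.comp g).natDegree = f.natDegree * 2 := by
        rw [Polynomial.natDegree_comp, hg]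
      have h2 : (minpoly ℚ β).natDegree ≤ f.natDegree := by
        have h3 : (minpoly ℚ β).natDegree ≤ Module.finrank ℚ K := minpoly.natDegree_le β
        rwa [hfin] at h3
      have := congrArg Polynomial.natDegree hc
      rw [Polynomial.natDegree_mul (minpoly.ne_zero hβint) hcne, hdegc, h1] at this
      omega


theorem comp_quadratic_not_irreducible_iff_root (f : Polynomial ℚ) (hmonic : f.Monic)
    (hirr : Irreducible f) (d : ℕ) (hdeg : f.natDegree = d)
    (K : Type*) [Field K] [Algebra ℚ K] (α : K) (hroot : Polynomial.aeval α f = 0)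
    (hgen : Algebra.adjoin ℚ ({α} : Set K) = ⊤)
    (g : Polynomial ℚ) (hg : g.natDegree = 2) :
    ¬ Irreducible (f.comp g) ↔ ∃ β : K, Polynomial.aeval β g = α := by
  set c := g.leadingCoeff with hcdef
  have hg0 : g ≠ 0 := fun h => by simp [h] at hg
  have hc : c ≠ 0 := leadingCoeff_ne_zero.mpr hg0
  haveI : Invertible c := invertibleOfNonzero hc
  set g₁ : Polynomial ℚ := g * C c⁻¹ with hg₁def
  have hg₁m : g₁.Monic := monic_mul_leadingCoeff_inv hg0
  have hg₁deg : g₁.natDegree = 2 := by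
    rw [hg₁def, natDegree_mul_leadingCoeff_inv _ hg0, hg]
  -- f composed with the linear polynomial C c * X
  have hf2irr : Irreducible (f.comp (C c * X)) := by
    have h1 := (MulEquiv.irreducible_iff (algEquivCMulXAddC c 0).toMulEquiv).mpr hirr
    have h2 : (algEquivCMulXAddC c 0).toMulEquiv f = f.comp (C c * X) := by
      show (algEquivCMulXAddC c 0) f = f.comp (C c * X)
      rw [algEquivCMulXAddC_apply, C_0, add_zero, comp_eq_aeval]
    rwa [h2] at h1
  have hlc : (f.comp (C c * X)).leadingCoeff = c ^ f.natDegree := by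
    rw [leadingCoeff_comp (by rw [natDegree_C_mul_X _ hc]; exact one_ne_zero),
      hmonic.leadingCoeff, one_mul]
    rw [leadingCoeff_mul, leadingCoeff_C, leadingCoeff_X, mul_one]
  have hpow : c ^ f.natDegree ≠ 0 := pow_ne_zero _ hc
  have hcomp_ne : f.comp (C c * X) ≠ 0 :=
    leadingCoeff_ne_zero.mp (by rw [hlc]; exact hpow)
  set f₁ : Polynomial ℚ := f.comp (C c * X) * C (c ^ f.natDegree)⁻¹ with hf₁def
  have hf₁m : f₁.Monic := by
    have := monic_mul_leadingCoeff_inv hcomp_ne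
    rwa [hlc] at this
  have huC : IsUnit (C (c ^ f.natDegree)⁻¹) := isUnit_C.mpr (inv_ne_zero hpow).isUnit
  have hf₁irr : Irreducible f₁ := (irreducible_mul_isUnit huC).mpr hf2irr
  set α₁ : K := algebraMap ℚ K c⁻¹ * α with hα₁def
  have hca : algebraMap ℚ K c ≠ 0 :=
    (map_ne_zero_iff _ (algebraMap ℚ K).injective).mpr hc
  have hmulback : algebraMap ℚ K c * α₁ = α := by
    rw [hα₁def, ← mul_assoc, ← map_mul, mul_inv_cancel₀ hc, map_one, one_mul]
  have hroot₁ : Polynomial.aeval α₁ f₁ = 0 := by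
    rw [hf₁def, map_mul, aeval_C, aeval_comp, map_mul, aeval_C, aeval_X, hmulback, hroot,
      zero_mul]
  have hgen₁ : Algebra.adjoin ℚ ({α₁} : Set K) = ⊤ := by
    have key : Algebra.adjoin ℚ ({α₁} : Set K) = Algebra.adjoin ℚ {α} := by
      apply le_antisymm
      · rw [Algebra.adjoin_le_iff, Set.singleton_subset_iff]
        exact Subalgebra.mul_mem _ (Subalgebra.algebraMap_mem _ c⁻¹)
          (Algebra.subset_adjoin rfl)
      · rw [Algebra.adjoin_le_iff, Set.singleton_subset_iff]
        rw [← hmulback]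
        exact Subalgebra.mul_mem _ (Subalgebra.algebraMap_mem _ c)
          (Algebra.subset_adjoin rfl)
    rw [key, hgen]
  have hcompeq : f₁.comp g₁ = f.comp g * C (c ^ f.natDegree)⁻¹ := by
    rw [hf₁def, mul_comp, C_comp, comp_assoc, mul_comp, C_comp, X_comp]
    congr 2
    rw [hg₁def, mul_comm (C c), mul_assoc, ← C_mul, inv_mul_cancel₀ hc, C_1, mul_one]
  have main := aux_monic f₁ hf₁m hf₁irr K α₁ hroot₁ hgen₁ g₁ hg₁deg hg₁m
  rw [hcompeq, irreducible_mul_isUnit huC] at main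
  rw [main]
  apply exists_congr
  intro β
  rw [hg₁def, map_mul, aeval_C, hα₁def]
  constructor
  · intro h
    calc Polynomial.aeval β g
        = (Polynomial.aeval β g * algebraMap ℚ K c⁻¹) * algebraMap ℚ K c := by
          rw [mul_assoc, ← map_mul, inv_mul_cancel₀ hc, map_one, mul_one]
      _ = (algebraMap ℚ K c⁻¹ * α) * algebraMap ℚ K c := by rw [h]
      _ = α := by
          rw [mul_comm, ← mul_assoc, ← map_mul, mul_inv_cancel₀ hc, map_one, one_mul]
  · intro h
    rw [map_inv₀, h, mul_comm]
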